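/- Let C_{k+1} act on words of length k+1 over Z/mZ by cyclic left rotation, and let W be the set of such words with sum ≡ m-1 (mod m). Then for every divisor d of k+1, the number of words in W fixed by rotation by d positions equals W(ζ^d), where ζ is a primitive (k+1)-th root of unity and W(q) = ∏_{i=1}^{k} (1-q^{mi})/(1-q^i). That is, (W, W(q), C_{k+1}) exhibits the cyclic sieving phenomenon. -/

import Mathlib

open Finset
open Fin.NatCast

private lemma sum_mod_aux (m k e t : ℕ) (hdt : (e + 1) * t = k + 1)
    (v : Fin (e + 1) → ZMod m) :
    ∑ i : Fin (k + 1), v ⟨i.val % (e + 1), Nat.mod_lt _ (Nat.succ_pos e)⟩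
      = (t : ZMod m) * ∑ r, v r := by
  have htd : t * (e + 1) = k + 1 := by rw [mul_comm]; exact hdt
  let f : ℕ → ZMod m := fun a => v ⟨a % (e + 1), Nat.mod_lt _ (Nat.succ_pos e)⟩
  calc ∑ i : Fin (k + 1), v ⟨i.val % (e + 1), Nat.mod_lt _ (Nat.succ_pos e)⟩
      = ∑ a ∈ range (k + 1), f a := Fin.sum_univ_eq_sum_range f (k + 1)
    _ = ∑ i : Fin (t * (e + 1)), f i.val := by rw [htd, ← Fin.sum_univ_eq_sum_range]
    _ = ∑ p : Fin t × Fin (e + 1), f ((finProdFinEquiv p).val) :=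
        (Fintype.sum_equiv finProdFinEquiv _ _ (fun p => rfl)).symm
    _ = ∑ q : Fin t, ∑ r : Fin (e + 1), f ((finProdFinEquiv (q, r)).val) :=
        Fintype.sum_prod_type _
    _ = ∑ _q : Fin t, ∑ r : Fin (e + 1), v r := by
        refine Finset.sum_congr rfl fun q _ => Finset.sum_congr rfl fun r _ => ?_
        show v ⟨(finProdFinEquiv (q, r)).val % (e + 1), _⟩ = v r
        congr 1
        apply Fin.ext
        show (finProdFinEquiv (q, r)).val % (e + 1) = r.val
        rw [finProdFinEquiv_apply_val]
        show (r.val + (e + 1) * q.val) % (e + 1) = r.val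
        rw [Nat.add_mul_mod_self_left, Nat.mod_eq_of_lt r.isLt]
    _ = (t : ZMod m) * ∑ r, v r := by
        rw [Finset.sum_const, Finset.card_univ, Fintype.card_fin, nsmul_eq_mul]

private lemma count_fixed (m k e t : ℕ) (hm : 1 ≤ m) (hdt : (e + 1) * t = k + 1) :
    Nat.card {w : Fin (k + 1) → ZMod m //
        (∑ i, w i = ((m - 1 : ℕ) : ZMod m)) ∧
          ∀ i, w (i + ((e + 1 : ℕ) : Fin (k + 1))) = w i}
      = m ^ e * Nat.card {s : ZMod m // (t : ZMod m) * s = -1} := by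
  have ht : 0 < t := Nat.pos_of_ne_zero fun h => by simp [h] at hdt
  have hde : e + 1 ≤ k + 1 := by
    calc e + 1 ≤ (e + 1) * t := Nat.le_mul_of_pos_right _ ht
      _ = k + 1 := hdt
  have hm1 : ((m - 1 : ℕ) : ZMod m) = -1 := by
    rw [Nat.cast_sub hm, Nat.cast_one, ZMod.natCast_self, zero_sub]
  -- periodicity key
  have hper_key : ∀ (w : Fin (k + 1) → ZMod m),
      (∀ i, w (i + ((e + 1 : ℕ) : Fin (k + 1))) = w i) →
      ∀ a : ℕ, w ((a : ℕ) : Fin (k + 1)) = w ((a % (e + 1) : ℕ) : Fin (k + 1)) := by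
    intro w hw a
    induction a using Nat.strong_induction_on with
    | _ a ih =>
      rcases lt_or_ge a (e + 1) with h | h
      · rw [Nat.mod_eq_of_lt h]
      · have h2 : a - (e + 1) + (e + 1) = a := Nat.sub_add_cancel h
        have h1 : ((a : ℕ) : Fin (k + 1))
            = ((a - (e + 1) : ℕ) : Fin (k + 1)) + ((e + 1 : ℕ) : Fin (k + 1)) := by
          rw [← Nat.cast_add, h2]
        rw [h1, hw, ih (a - (e + 1)) (by omega)]
        congr 1
        conv_rhs => rw [← h2]
        rw [Nat.add_mod_right]
  have hsum_w : ∀ (w : Fin (k + 1) → ZMod m),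
      (∀ i, w (i + ((e + 1 : ℕ) : Fin (k + 1))) = w i) →
      ∑ i, w i = (t : ZMod m) * ∑ r : Fin (e + 1), w ((r.val : ℕ) : Fin (k + 1)) := by
    intro w hw
    have h1 : ∀ i : Fin (k + 1), w i
        = (fun r : Fin (e + 1) => w ((r.val : ℕ) : Fin (k + 1)))
            ⟨i.val % (e + 1), Nat.mod_lt _ (Nat.succ_pos e)⟩ := by
      intro i
      show w i = w (((i.val % (e + 1) : ℕ)) : Fin (k + 1))
      conv_lhs => rw [← Fin.cast_val_eq_self i]
      exact hper_key w hw i.val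
    rw [Finset.sum_congr rfl (fun i _ => h1 i)]
    exact sum_mod_aux m k e t hdt (fun r => w ((r.val : ℕ) : Fin (k + 1)))
  let E1 : {w : Fin (k + 1) → ZMod m //
        (∑ i, w i = ((m - 1 : ℕ) : ZMod m)) ∧
          ∀ i, w (i + ((e + 1 : ℕ) : Fin (k + 1))) = w i} ≃
      {v : Fin (e + 1) → ZMod m // (t : ZMod m) * ∑ r, v r = -1} :=
  { toFun := fun w => ⟨fun r => w.1 ((r.val : ℕ) : Fin (k + 1)), by
      rw [← hsum_w w.1 w.2.2, w.2.1, hm1]⟩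
    invFun := fun v => ⟨fun i => v.1 ⟨i.val % (e + 1), Nat.mod_lt _ (Nat.succ_pos e)⟩, by
      constructor
      · rw [hm1, sum_mod_aux m k e t hdt v.1]
        exact v.2
      · intro i
        refine congrArg v.1 (Fin.ext ?_)
        show (i + ((e + 1 : ℕ) : Fin (k + 1))).val % (e + 1) = i.val % (e + 1)
        rw [Fin.add_def]
        show (i.val + ((e + 1 : ℕ) : Fin (k + 1)).val) % (k + 1) % (e + 1)
            = i.val % (e + 1)
        rw [Nat.mod_mod_of_dvd _ ⟨t, hdt.symm⟩, Fin.val_natCast]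
        have hmod : (e + 1) % (k + 1) % (e + 1) = 0 := by
          rcases eq_or_lt_of_le hde with h | h
          · rw [h, Nat.mod_self, Nat.zero_mod]
          · rw [Nat.mod_eq_of_lt h, Nat.mod_self]
        rw [Nat.add_mod, hmod, Nat.add_zero, Nat.mod_mod_of_dvd _ (dvd_refl (e + 1))]⟩
    left_inv := fun w => by
      apply Subtype.ext
      funext i
      show w.1 (((i.val % (e + 1) : ℕ)) : Fin (k + 1)) = w.1 i
      conv_rhs => rw [← Fin.cast_val_eq_self i]
      exact (hper_key w.1 w.2.2 i.val).symm
    right_inv := fun v => by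
      apply Subtype.ext
      funext r
      refine congrArg v.1 (Fin.ext ?_)
      show ((r.val : ℕ) : Fin (k + 1)).val % (e + 1) = r.val
      rw [Fin.val_natCast, Nat.mod_eq_of_lt (lt_of_lt_of_le r.isLt hde),
        Nat.mod_eq_of_lt r.isLt] }
  let E2 : {v : Fin (e + 1) → ZMod m // (t : ZMod m) * ∑ r, v r = -1} ≃
      (Fin e → ZMod m) × {s : ZMod m // (t : ZMod m) * s = -1} :=
  { toFun := fun v => (Fin.tail v.1, ⟨∑ r, v.1 r, v.2⟩)
    invFun := fun p => ⟨Fin.cons (p.2.1 - ∑ r, p.1 r) p.1, by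
      rw [Fin.sum_cons, sub_add_cancel]; exact p.2.2⟩
    left_inv := fun v => by
      apply Subtype.ext
      have h0 : ∑ r, v.1 r = v.1 0 + ∑ r : Fin e, Fin.tail v.1 r := Fin.sum_univ_succ v.1
      show Fin.cons (∑ r, v.1 r - ∑ r, Fin.tail v.1 r) (Fin.tail v.1) = v.1
      rw [h0, add_sub_cancel_right, Fin.cons_self_tail]
    right_inv := fun p => by
      dsimp only
      refine Prod.ext ?_ (Subtype.ext ?_)
      · show Fin.tail (Fin.cons (p.2.1 - ∑ r, p.1 r) p.1 : Fin (e + 1) → ZMod m) = p.1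
        exact Fin.tail_cons _ _
      · show ∑ r, (Fin.cons (p.2.1 - ∑ r, p.1 r) p.1 : Fin (e + 1) → ZMod m) r = p.2.1
        rw [Fin.sum_cons, sub_add_cancel] }
  rw [Nat.card_congr (E1.trans E2), Nat.card_prod, Nat.card_fun, Nat.card_zmod,
    Nat.card_eq_fintype_card, Fintype.card_fin]

/-- The cyclic sieving phenomenon for words of length `k+1` over `ℤ/mℤ`
with letter sum `m-1`, under cyclic rotation. -/
theorem csp_words (m k : ℕ) (hm : 1 ≤ m) (ζ : ℂ) (hζ : IsPrimitiveRoot ζ (k + 1))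
    (d : ℕ) (hd : d ∣ (k + 1)) :
    (Nat.card {w : Fin (k + 1) → ZMod m //
        (∑ i, w i = ((m - 1 : ℕ) : ZMod m)) ∧ ∀ i, w (i + (Fin.ofNat (k + 1) d : Fin (k + 1))) = w i} : ℂ)
      = ∏ i ∈ Finset.Icc 1 k, ∑ j ∈ Finset.range m, (ζ ^ d) ^ (j * i) := by
  obtain ⟨t, hkt⟩ := hd
  have hd0 : d ≠ 0 := by rintro rfl; simp at hkt
  obtain ⟨e, rfl⟩ : ∃ e, d = e + 1 := ⟨d - 1, by omega⟩
  have hdt : (e + 1) * t = k + 1 := hkt.symm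
  have ht : 0 < t := Nat.pos_of_ne_zero fun h => by simp [h] at hdt
  rw [show (Fin.ofNat (k + 1) (e + 1) : Fin (k + 1)) = ((e + 1 : ℕ) : Fin (k + 1)) from rfl,
    count_fixed m k e t hm hdt]
  set η := ζ ^ (e + 1) with hηdef
  have hη : IsPrimitiveRoot η t := hζ.pow (Nat.succ_pos k) hkt
  have horder : orderOf η = t := hη.eq_orderOf.symm
  have hS : ∀ i : ℕ, ∑ j ∈ Finset.range m, η ^ (j * i) = ∑ j ∈ Finset.range m, (η ^ i) ^ j := by
    intro i
    refine Finset.sum_congr rfl fun j _ => ?_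
    rw [Nat.mul_comm j i, pow_mul]
  have hB : ∏ i ∈ (Finset.Icc 1 k).filter (fun i => t ∣ i),
      (∑ j ∈ Finset.range m, η ^ (j * i)) = (m : ℂ) ^ e := by
    have hval : ∀ i ∈ (Finset.Icc 1 k).filter (fun i => t ∣ i),
        (∑ j ∈ Finset.range m, η ^ (j * i)) = (m : ℂ) := by
      intro i hi
      simp only [Finset.mem_filter] at hi
      rw [hS i, (hη.pow_eq_one_iff_dvd i).mpr hi.2]
      simp
    rw [Finset.prod_congr rfl hval, Finset.prod_const]
    congr 1
    have hIcc : (Finset.Icc 1 k).filter (fun i => t ∣ i)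
        = (Finset.Ioc 0 k).filter (fun i => t ∣ i) := by
      congr 1
    rw [hIcc, Nat.Ioc_filter_dvd_card_eq_div]
    apply Nat.div_eq_of_lt_le
    · have h1 : (e + 1) * t = e * t + t := by ring
      omega
    · omega
  by_cases hco : Nat.Coprime t m
  · -- coprime case
    haveI : NeZero m := ⟨by omega⟩
    have hunit : IsUnit ((t : ℕ) : ZMod m) := (ZMod.isUnit_iff_coprime t m).mpr hco
    obtain ⟨u, hu⟩ := hunit
    haveI : Unique {s : ZMod m // (t : ZMod m) * s = -1} :=
    { default := ⟨(↑u⁻¹ : ZMod m) * (-1), by rw [← hu, ← mul_assoc, u.mul_inv, one_mul]⟩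
      uniq := fun s => Subtype.ext (by
        have hs : (↑u : ZMod m) * s.1 = -1 := by rw [hu]; exact s.2
        show s.1 = (↑u⁻¹ : ZMod m) * (-1)
        calc s.1 = (↑u⁻¹ : ZMod m) * (↑u * s.1) := by rw [← mul_assoc, u.inv_mul, one_mul]
        _ = (↑u⁻¹ : ZMod m) * (-1) := by rw [hs]) }
    rw [Nat.card_unique, mul_one]
    have hA1 : ∏ i ∈ (Finset.Icc 1 k).filter (fun i => ¬ t ∣ i),
        (∑ j ∈ Finset.range m, η ^ (j * i)) = 1 := by
      rcases eq_or_lt_of_le (show 1 ≤ t from ht) with ht1 | ht2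
      · have hempty : (Finset.Icc 1 k).filter (fun i => ¬ t ∣ i) = ∅ := by
          apply Finset.filter_false_of_mem
          intro i _
          rw [← ht1]
          exact not_not_intro (one_dvd i)
        rw [hempty, Finset.prod_empty]
      · obtain ⟨m', -, hmm'⟩ := Nat.exists_mul_mod_eq_one_of_coprime hco.symm ht2
        have hmulmod : ∀ a : ℕ, a * m * m' % t = a % t := by
          intro a
          obtain ⟨q, hq⟩ : ∃ q, m * m' = t * q + 1 :=
            ⟨m * m' / t, by rw [← hmm']; exact (Nat.div_add_mod (m * m') t).symm⟩
          have h7 : a * m * m' = a + (a * q) * t := by rw [mul_assoc, hq]; ring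
          rw [h7, Nat.add_mul_mod_self_right]
        have hmulmod' : ∀ a : ℕ, a * m' * m % t = a % t := by
          intro a
          rw [show a * m' * m = a * m * m' by ring]
          exact hmulmod a
        have hdiv1 : ∀ b i : ℕ, (t * (i / t) + (i * b) % t) / t = i / t := by
          intro b i
          rw [Nat.mul_add_div ht, Nat.div_eq_of_lt (Nat.mod_lt _ ht), Nat.add_zero]
        have hmod1 : ∀ b i : ℕ, (t * (i / t) + (i * b) % t) % t = (i * b) % t := by
          intro b i
          rw [Nat.mul_add_mod, Nat.mod_mod_of_dvd _ (dvd_refl t)]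
        have hcomp : ∀ (b b' : ℕ), (∀ a, a * b * b' % t = a % t) → ∀ i : ℕ,
            t * ((t * (i / t) + (i * b) % t) / t)
              + ((t * (i / t) + (i * b) % t) * b') % t = i := by
          intro b b' hbb i
          rw [hdiv1 b i]
          have h8 : ((t * (i / t) + (i * b) % t) * b') % t = i % t := by
            rw [← Nat.mod_mul_mod, hmod1 b i, Nat.mod_mul_mod, hbb i]
          rw [h8, Nat.div_add_mod]
        have hAmem : ∀ i : ℕ, i ∈ (Finset.Icc 1 k).filter (fun i => ¬ t ∣ i)
            ↔ (1 ≤ i ∧ i ≤ k ∧ ¬ t ∣ i) := by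
          intro i
          simp [Finset.mem_filter, Finset.mem_Icc, and_assoc]
        have hgen : ∀ b i : ℕ, ¬ t ∣ i * b → i ≤ k →
            t * (i / t) + (i * b) % t ∈ (Finset.Icc 1 k).filter (fun i => ¬ t ∣ i) := by
          intro b i hnd hik
          rw [hAmem]
          have h2 : ¬ t ∣ (t * (i / t) + (i * b) % t) := by
            intro hdvd
            apply hnd
            apply Nat.dvd_of_mod_eq_zero
            have h0 : (t * (i / t) + (i * b) % t) % t = 0 := Nat.mod_eq_zero_of_dvd hdvd
            rw [hmod1 b i] at h0
            exact h0
          have hlow : 1 ≤ t * (i / t) + (i * b) % t := by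
            rcases Nat.eq_zero_or_pos (t * (i / t) + (i * b) % t) with h0 | h0
            · rw [h0] at h2
              exact absurd (dvd_zero t) h2
            · exact h0
          have hiq : i / t ≤ e := by
            have h9 : i / t < e + 1 := (Nat.div_lt_iff_lt_mul ht).mpr (by rw [hdt]; omega)
            exact Nat.lt_succ_iff.mp h9
          have h3 : t * (i / t) ≤ t * e := Nat.mul_le_mul le_rfl hiq
          have h4 : (i * b) % t < t := Nat.mod_lt _ ht
          have h5 : t * e + t = k + 1 := by rw [← hdt]; ring
          have h6 : t * (i / t) + (i * b) % t < t * e + t := add_lt_add_of_le_of_lt h3 h4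
          rw [h5] at h6
          exact ⟨hlow, Nat.lt_succ_iff.mp h6, h2⟩
        have hne1 : ∀ i ∈ (Finset.Icc 1 k).filter (fun i => ¬ t ∣ i), η ^ i ≠ 1 := by
          intro i hi h1
          rw [hAmem] at hi
          rw [hη.pow_eq_one_iff_dvd] at h1
          exact hi.2.2 h1
        have step1 : ∀ i ∈ (Finset.Icc 1 k).filter (fun i => ¬ t ∣ i),
            (∑ j ∈ Finset.range m, η ^ (j * i)) = (η ^ (i * m) - 1) / (η ^ i - 1) := by
          intro i hi
          rw [hS i, geom_sum_eq (hne1 i hi) m, ← pow_mul]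
        rw [Finset.prod_congr rfl step1, Finset.prod_div_distrib]
        have hpow : ∀ b i : ℕ, η ^ (t * (i / t) + (i * b) % t) = η ^ (i * b) := by
          intro b i
          rw [pow_add, pow_mul, hη.pow_eq_one, one_pow, one_mul]
          conv_lhs => rw [← horder]
          exact pow_mod_orderOf η (i * b)
        have hperm : (∏ i ∈ (Finset.Icc 1 k).filter (fun i => ¬ t ∣ i), (η ^ (i * m) - 1))
            = ∏ i ∈ (Finset.Icc 1 k).filter (fun i => ¬ t ∣ i), (η ^ i - 1) := by
          refine Finset.prod_nbij' (fun i => t * (i / t) + (i * m) % t)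
            (fun i => t * (i / t) + (i * m') % t) ?_ ?_ ?_ ?_ ?_
          · intro a ha
            rw [hAmem] at ha
            exact hgen m a (fun hdvd => ha.2.2 (hco.dvd_of_dvd_mul_right hdvd)) ha.2.1
          · intro a ha
            rw [hAmem] at ha
            refine hgen m' a ?_ ha.2.1
            intro hdvd
            apply ha.2.2
            apply Nat.dvd_of_mod_eq_zero
            have h6 : t ∣ a * m' * m := Dvd.dvd.mul_right hdvd m
            have h8 : (a * m' * m) % t = 0 := Nat.mod_eq_zero_of_dvd h6
            rw [hmulmod' a] at h8
            exact h8
          · intro a _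
            exact hcomp m m' hmulmod a
          · intro a _
            exact hcomp m' m hmulmod' a
          · intro a _
            rw [hpow m a]
        rw [hperm, div_self]
        rw [Finset.prod_ne_zero_iff]
        intro i hi
        exact sub_ne_zero.mpr (hne1 i hi)
    rw [← Finset.prod_filter_mul_prod_filter_not (Finset.Icc 1 k) (fun i => t ∣ i), hB, hA1,
      mul_one]
    push_cast
    ring
  · -- non-coprime case
    have hgcd0 : 0 < Nat.gcd t m := Nat.gcd_pos_of_pos_left m ht
    have hc2 : 2 ≤ Nat.gcd t m := by
      have : Nat.gcd t m ≠ 1 := hco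
      omega
    obtain ⟨t', ht'⟩ := Nat.gcd_dvd_left t m
    obtain ⟨m2, hm2⟩ := Nat.gcd_dvd_right t m
    have ht'pos : 0 < t' := Nat.pos_of_ne_zero fun h => by
      rw [h, Nat.mul_zero] at ht'
      omega
    have htlt : t' < t := by
      have h8 : 2 * t' ≤ Nat.gcd t m * t' := Nat.mul_le_mul_right t' hc2
      rw [← ht'] at h8
      omega
    have htk : t ≤ k + 1 := by
      calc t ≤ (e + 1) * t := Nat.le_mul_of_pos_left t (Nat.succ_pos e)
        _ = k + 1 := hdt
    haveI : IsEmpty {s : ZMod m // (t : ZMod m) * s = -1} := by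
      constructor
      rintro ⟨s, hs⟩
      haveI : NeZero (Nat.gcd t m) := ⟨by omega⟩
      have hcm : Nat.gcd t m ∣ m := ⟨m2, hm2⟩
      have hmap := congrArg (ZMod.castHom hcm (ZMod (Nat.gcd t m))) hs
      rw [map_mul, map_natCast, map_neg, map_one] at hmap
      have htc : ((t : ℕ) : ZMod (Nat.gcd t m)) = 0 :=
        (ZMod.natCast_eq_zero_iff t _).mpr ⟨t', ht'⟩
      rw [htc, zero_mul] at hmap
      have h1 : ((1 : ℕ) : ZMod (Nat.gcd t m)) = 0 := by
        rw [Nat.cast_one]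
        exact neg_eq_zero.mp hmap.symm
      have h2 : Nat.gcd t m ∣ 1 := (ZMod.natCast_eq_zero_iff 1 _).mp h1
      have := Nat.le_of_dvd one_pos h2
      omega
    rw [Nat.card_of_isEmpty, Nat.mul_zero, Nat.cast_zero]
    symm
    apply Finset.prod_eq_zero (i := t')
    · rw [Finset.mem_Icc]
      omega
    · rw [hS t']
      have hne : η ^ t' ≠ 1 := by
        intro h1
        rw [hη.pow_eq_one_iff_dvd] at h1
        have := Nat.le_of_dvd ht'pos h1
        omega
      rw [geom_sum_eq hne m]
      have hone : (η ^ t') ^ m = 1 := by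
        rw [← pow_mul, hη.pow_eq_one_iff_dvd]
        refine ⟨m2, ?_⟩
        calc t' * m = t' * (t.gcd m * m2) := by conv_lhs => rw [hm2]
          _ = t.gcd m * t' * m2 := by ring
          _ = t * m2 := by rw [← ht']
      rw [hone, sub_self, zero_div]
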